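/- Let Δ_1, …, Δ_r and ∇_1, …, ∇_r be dual to each other centered nef-partitions in ℝ^d, with Δ = Δ_1 + ⋯ + Δ_r and Δ* = {y ∈ ℝ^d : ⟨x,y⟩ ≥ −1 for all x ∈ Δ}. Then for every i = 1, …, r, the set of nonzero vertices of ∇_i equals {v ∈ V(Δ*) : min_{u ∈ Δ_i} ⟨u,v⟩ = −1}, where V(Δ*) denotes the vertex set (set of extreme points) of Δ*. -/

import Mathlib

open Pointwise

noncomputable section

/-- A point of `ℝ^n` all of whose coordinates are integers (a lattice point of `ℤ^n`). -/
def IsLatticePt {n : ℕ} (x : Fin n → ℝ) : Prop := ∀ k, ∃ m : ℤ, x k = (m : ℝ)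

/-- A lattice polytope: the convex hull of finitely many lattice points. -/
def IsLatticePoly {n : ℕ} (P : Set (Fin n → ℝ)) : Prop :=
  ∃ V : Finset (Fin n → ℝ), V.Nonempty ∧ (∀ v ∈ V, IsLatticePt v) ∧
    P = convexHull ℝ (V : Set (Fin n → ℝ))

/-- The standard inner product pairing on `ℝ^n`. -/
def pairR {n : ℕ} (x y : Fin n → ℝ) : ℝ := ∑ k, x k * y k

/-- The dual polytope `P* = {y : ⟨x,y⟩ ≥ -1 ∀ x ∈ P}`. -/
def dualPoly {n : ℕ} (P : Set (Fin n → ℝ)) : Set (Fin n → ℝ) :=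
  {y | ∀ x ∈ P, -1 ≤ pairR x y}

/-- A reflexive polytope: a lattice polytope with `0` in its interior whose dual
polytope is again a lattice polytope. -/
def IsReflexivePoly {n : ℕ} (P : Set (Fin n → ℝ)) : Prop :=
  IsLatticePoly P ∧ (0 : Fin n → ℝ) ∈ interior P ∧ IsLatticePoly (dualPoly P)

/-- The dimension of a polytope: the dimension of the direction of its affine span. -/
def polyDim {n : ℕ} (P : Set (Fin n → ℝ)) : ℕ :=
  Module.finrank ℝ (affineSpan ℝ P).direction

/-- A (full-dimensional) Gorenstein polytope of index `r`: `rP` has `m` as its unique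
interior lattice point and `rP - m` is reflexive. -/
def IsGorensteinPoly {n : ℕ} (P : Set (Fin n → ℝ)) (r : ℕ) (m : Fin n → ℝ) : Prop :=
  IsLatticePoly P ∧ IsLatticePt m ∧
  (∀ x, IsLatticePt x → (x ∈ interior ((r : ℝ) • P) ↔ x = m)) ∧
  IsReflexivePoly ((fun x => x - m) '' ((r : ℝ) • P))

/-- `y` is a point of the lattice dual to the (saturated) lattice `ℤ^n ∩ W` inside `W`. -/
def IsDualLatticePt {n : ℕ} (W : Submodule ℝ (Fin n → ℝ)) (y : Fin n → ℝ) : Prop :=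
  y ∈ W ∧ ∀ x ∈ W, IsLatticePt x → ∃ m : ℤ, pairR x y = (m : ℝ)

/-- Reflexivity of a (possibly lower-dimensional) lattice polytope inside its linear
span: `0` is in the relative interior and the dual polytope taken inside the linear
span is a lattice polytope with respect to the dual lattice. -/
def IsReflexiveIn {n : ℕ} (P : Set (Fin n → ℝ)) : Prop :=
  IsLatticePoly P ∧ (0 : Fin n → ℝ) ∈ intrinsicInterior ℝ P ∧
  ∃ V : Finset (Fin n → ℝ), V.Nonempty ∧
    (∀ v ∈ V, IsDualLatticePt (Submodule.span ℝ P) v) ∧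
    {y | y ∈ Submodule.span ℝ P ∧ ∀ x ∈ P, -1 ≤ pairR x y} =
      convexHull ℝ (V : Set (Fin n → ℝ))

/-- Gorenstein polytope of index `r` (possibly lower-dimensional): `rP` has `m` as its
unique relative-interior lattice point and `rP - m` is reflexive within its span. -/
def IsGorensteinIn {n : ℕ} (P : Set (Fin n → ℝ)) (r : ℕ) (m : Fin n → ℝ) : Prop :=
  IsLatticePoly P ∧ IsLatticePt m ∧
  (∀ x, IsLatticePt x → (x ∈ intrinsicInterior ℝ ((r : ℝ) • P) ↔ x = m)) ∧
  IsReflexiveIn ((fun x => x - m) '' ((r : ℝ) • P))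

/-- The Minkowski sum `Δ 0 + ⋯ + Δ (r-1)` of a family of sets. -/
def minkSum {n r : ℕ} (Δ : Fin r → Set (Fin n → ℝ)) : Set (Fin n → ℝ) :=
  {x | ∃ f : Fin r → (Fin n → ℝ), (∀ i, f i ∈ Δ i) ∧ x = ∑ i, f i}

/-- The Minkowski sum `Σ_{i ∈ I} Δ i`. -/
def minkSumOver {n r : ℕ} (I : Finset (Fin r)) (Δ : Fin r → Set (Fin n → ℝ)) :
    Set (Fin n → ℝ) :=
  {x | ∃ f : Fin r → (Fin n → ℝ), (∀ i ∈ I, f i ∈ Δ i) ∧ x = ∑ i ∈ I, f i}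

/-- The point `x × e_i ∈ ℝ^d × ℝ^r`. -/
def cayleyPt {d r : ℕ} (x : Fin d → ℝ) (i : Fin r) : Fin (d + r) → ℝ :=
  Fin.append x (fun j => if j = i then 1 else 0)

/-- The Cayley polytope `Δ 0 * ⋯ * Δ (r-1) ⊂ ℝ^d × ℝ^r`. -/
def cayley {d r : ℕ} (Δ : Fin r → Set (Fin d → ℝ)) : Set (Fin (d + r) → ℝ) :=
  convexHull ℝ (⋃ i, (fun x => cayleyPt x i) '' Δ i)

/-- `F` is a facet of `P`: a nonempty exposed face of dimension one less. -/
def IsFacetOf {n : ℕ} (F P : Set (Fin n → ℝ)) : Prop :=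
  IsExposed ℝ P F ∧ F.Nonempty ∧ polyDim F + 1 = polyDim P

/-- A special `(r-1)`-simplex of `P`: `r` affinely independent lattice points of `P`
such that every facet of `P` contains exactly `r - 1` of them. -/
def IsSpecialSimplex {n : ℕ} (P : Set (Fin n → ℝ)) (r : ℕ) (v : Fin r → Fin n → ℝ) : Prop :=
  (∀ i, IsLatticePt (v i) ∧ v i ∈ P) ∧ AffineIndependent ℝ v ∧
  ∀ F, IsFacetOf F P → ∃! i, v i ∉ F

/-- `∇_i = {y : ⟨x,y⟩ ≥ -δ_{ij} ∀ x ∈ Δ_j ∀ j}`, the polytopes of the dual nef-partition. -/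
def nefDual {d r : ℕ} (Δ : Fin r → Set (Fin d → ℝ)) (i : Fin r) : Set (Fin d → ℝ) :=
  {y | ∀ j, ∀ x ∈ Δ j, -(if i = j then (1 : ℝ) else 0) ≤ pairR x y}

/-- A centered nef-partition: lattice polytopes containing `0` whose Minkowski sum is a
reflexive polytope with `0` as its unique interior lattice point. -/
def IsCenteredNefPartition {d r : ℕ} (Δ : Fin r → Set (Fin d → ℝ)) : Prop :=
  (∀ i, IsLatticePoly (Δ i) ∧ (0 : Fin d → ℝ) ∈ Δ i) ∧
  IsReflexivePoly (minkSum Δ) ∧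
  ∀ x, IsLatticePt x → x ∈ interior (minkSum Δ) → x = 0

/-- Two centered nef-partitions dual to each other. -/
def AreDualNefPartitions {d r : ℕ} (Δ Nb : Fin r → Set (Fin d → ℝ)) : Prop :=
  IsCenteredNefPartition Δ ∧ IsCenteredNefPartition Nb ∧
  (∀ i, Nb i = nefDual Δ i) ∧ (∀ i, Δ i = nefDual Nb i)

/-- A Gorenstein cone with its distinguished lattice point `nσ`: a full-dimensional cone
generated by finitely many lattice points on the hyperplane `⟨·, nσ⟩ = 1`. -/
def IsGorensteinCone {n : ℕ} (σ : Set (Fin n → ℝ)) (nσ : Fin n → ℝ) : Prop :=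
  IsLatticePt nσ ∧ Submodule.span ℝ σ = ⊤ ∧
  ∃ V : Finset (Fin n → ℝ), V.Nonempty ∧
    (∀ v ∈ V, IsLatticePt v ∧ pairR v nσ = 1) ∧
    σ = {x | ∃ c : (Fin n → ℝ) → ℝ, (∀ v, 0 ≤ c v) ∧ x = ∑ v ∈ V, c v • v}

/-- The dual cone. -/
def dualCone {n : ℕ} (σ : Set (Fin n → ℝ)) : Set (Fin n → ℝ) :=
  {y | ∀ x ∈ σ, 0 ≤ pairR x y}

/-- Integrally closed lattice polytope: every lattice point of `k • P` is a sum of `k`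
lattice points of `P`. -/
def IntegrallyClosed {n : ℕ} (P : Set (Fin n → ℝ)) : Prop :=
  ∀ (k : ℕ) (x : Fin n → ℝ), IsLatticePt x → x ∈ (k : ℝ) • P →
    ∃ v : Fin k → (Fin n → ℝ), (∀ j, IsLatticePt (v j) ∧ v j ∈ P) ∧ x = ∑ j, v j

lemma pairR_add_left {n : ℕ} (x x' y : Fin n → ℝ) :
    pairR (x + x') y = pairR x y + pairR x' y := by
  simp [pairR, add_mul, Finset.sum_add_distrib]

lemma pairR_smul_left {n : ℕ} (c : ℝ) (x y : Fin n → ℝ) :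
    pairR (c • x) y = c * pairR x y := by
  simp [pairR, Finset.mul_sum, mul_assoc]

lemma pairR_zero_left {n : ℕ} (y : Fin n → ℝ) : pairR 0 y = 0 := by
  simp [pairR]

lemma pairR_zero_right {n : ℕ} (x : Fin n → ℝ) : pairR x 0 = 0 := by
  simp [pairR]

lemma pairR_smul_right {n : ℕ} (c : ℝ) (x y : Fin n → ℝ) :
    pairR x (c • y) = c * pairR x y := by
  simp [pairR, Finset.mul_sum]; ring_nf; simp [mul_comm, mul_left_comm]

lemma pairR_add_right {n : ℕ} (x y y' : Fin n → ℝ) :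
    pairR x (y + y') = pairR x y + pairR x y' := by
  simp [pairR, mul_add, Finset.sum_add_distrib]

lemma pairR_sum_left {n : ℕ} {ι : Type*} (s : Finset ι) (f : ι → Fin n → ℝ)
    (y : Fin n → ℝ) : pairR (∑ j ∈ s, f j) y = ∑ j ∈ s, pairR (f j) y := by
  classical
  induction s using Finset.induction_on with
  | empty => simp [pairR_zero_left]
  | insert a s hns ih =>
      rw [Finset.sum_insert hns, Finset.sum_insert hns, pairR_add_left, ih]

lemma isLinearMap_pairR_left {n : ℕ} (v : Fin n → ℝ) :
    IsLinearMap ℝ (fun x : Fin n → ℝ => pairR x v) :=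
  ⟨fun a b => pairR_add_left a b v, fun c a => pairR_smul_left c a v⟩

lemma mem_minkSum_single {d r : ℕ} {Δ : Fin r → Set (Fin d → ℝ)}
    (h0 : ∀ j, (0 : Fin d → ℝ) ∈ Δ j) {i : Fin r} {u : Fin d → ℝ} (hu : u ∈ Δ i) :
    u ∈ minkSum Δ := by
  classical
  refine ⟨fun j => if j = i then u else 0, fun j => ?_, ?_⟩
  · by_cases hj : j = i <;> simp [hj, hu, h0 j]
  · simp [Finset.sum_ite_eq']

lemma mem_minkSum_pair {d r : ℕ} {Δ : Fin r → Set (Fin d → ℝ)}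
    (h0 : ∀ j, (0 : Fin d → ℝ) ∈ Δ j) {i j : Fin r} (hij : i ≠ j)
    {u x : Fin d → ℝ} (hu : u ∈ Δ i) (hx : x ∈ Δ j) : u + x ∈ minkSum Δ := by
  classical
  refine ⟨fun k => (if k = i then u else 0) + (if k = j then x else 0),
    fun k => ?_, ?_⟩
  · by_cases hki : k = i
    · subst hki
      simp [hij, hu]
    · by_cases hkj : k = j
      · subst hkj
        simp [hki, hx]
      · simp [hki, hkj, h0 k]
  · rw [Finset.sum_add_distrib]
    simp [Finset.sum_ite_eq']

lemma zero_mem_nefDual {d r : ℕ} (Δ : Fin r → Set (Fin d → ℝ)) (i : Fin r) :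
    (0 : Fin d → ℝ) ∈ nefDual Δ i := by
  intro j x hx
  rw [pairR_zero_right]
  by_cases hij : i = j <;> simp [hij]

/-- For dual centered nef-partitions, the nonzero vertices of `∇_i` are
exactly the vertices `v` of `Δ*` with `min_{u ∈ Δ_i} ⟨u,v⟩ = -1`. -/
theorem nef_partition_vertices {d r : ℕ}
    (Δ Nb : Fin r → Set (Fin d → ℝ))
    (h : AreDualNefPartitions Δ Nb) :
    ∀ i : Fin r,
      {v | v ∈ Set.extremePoints ℝ (Nb i) ∧ v ≠ 0} =
      {v ∈ Set.extremePoints ℝ (dualPoly (minkSum Δ)) |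
        (∀ u ∈ Δ i, -1 ≤ pairR u v) ∧ ∃ u ∈ Δ i, pairR u v = -1} := by
  classical
  obtain ⟨hΔ, _hNb, hNbDef, _hΔDef⟩ := h
  obtain ⟨hΔi, _hΔrefl, _hΔint⟩ := hΔ
  intro i
  have h0 : ∀ j, (0 : Fin d → ℝ) ∈ Δ j := fun j => (hΔi j).2
  -- `∇_i ⊆ Δ*`
  have hsub : Nb i ⊆ dualPoly (minkSum Δ) := by
    intro y hy
    rw [hNbDef i] at hy
    rintro x ⟨f, hf, rfl⟩
    rw [pairR_sum_left]
    calc (-1 : ℝ) = ∑ j, -(if i = j then (1 : ℝ) else 0) := by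
          simp [Finset.sum_ite_eq]
      _ ≤ _ := Finset.sum_le_sum fun j _ => hy j _ (hf j)
  have h0Nb : (0 : Fin d → ℝ) ∈ Nb i := by
    rw [hNbDef i]; exact zero_mem_nefDual Δ i
  ext v
  simp only [Set.mem_setOf_eq, Set.mem_sep_iff]
  constructor
  · rintro ⟨hv, hv0⟩
    have hvNb : v ∈ Nb i := hv.1
    have hvNb' : ∀ j, ∀ x ∈ Δ j, -(if i = j then (1 : ℝ) else 0) ≤ pairR x v := by
      have := hvNb; rwa [hNbDef i] at this
    have hge : ∀ u ∈ Δ i, -1 ≤ pairR u v := by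
      intro u hu
      have := hvNb' i u hu
      simpa using this
    -- locate the minimum of `⟨·,v⟩` on `Δ i`
    obtain ⟨V, hVne, _hVlat, hVhull⟩ := (hΔi i).1
    obtain ⟨u₀, hu₀V, hu₀⟩ := V.exists_mem_eq_inf' hVne (fun u => pairR u v)
    set c : ℝ := V.inf' hVne (fun u => pairR u v) with hc
    have hu₀Δ : u₀ ∈ Δ i := by
      rw [hVhull]; exact subset_convexHull ℝ _ hu₀V
    have hmin : ∀ x ∈ Δ i, c ≤ pairR x v := by
      intro x hx
      rw [hVhull] at hx
      have hcx : Convex ℝ {x : Fin d → ℝ | c ≤ pairR x v} :=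
        convex_halfSpace_ge (isLinearMap_pairR_left v) c
      exact convexHull_min (fun u hu => show c ≤ pairR u v from Finset.inf'_le _ hu) hcx hx
    have hc0 : c ≤ 0 := by
      have := hmin 0 (h0 i)
      rw [pairR_zero_left] at this; exact this
    have hc1 : -1 ≤ c := by rw [hu₀]; exact hge u₀ hu₀Δ
    -- the minimum is exactly -1
    have hcm1 : c = -1 := by
      by_contra hne
      have hclt : -1 < c := lt_of_le_of_ne hc1 (Ne.symm hne)
      set s : ℝ := (1 - c) / 2 with hs
      have hs0 : 0 < s := by simp only [hs]; linarith
      have hs1 : s < 1 := by simp only [hs]; linarith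
      have hcs : -s ≤ c := by simp only [hs]; linarith
      have hyNb : s⁻¹ • v ∈ Nb i := by
        rw [hNbDef i]
        intro j x hx
        rw [pairR_smul_right]
        by_cases hij : i = j
        · subst hij
          have h1 : -s ≤ pairR x v := le_trans hcs (hmin x hx)
          have h2 : s⁻¹ * (-s) ≤ s⁻¹ * pairR x v :=
            mul_le_mul_of_nonneg_left h1 (le_of_lt (inv_pos.2 hs0))
          have h3 : s⁻¹ * (-s) = -1 := by field_simp
          rw [h3] at h2
          simpa using h2
        · have := hvNb' j x hx
          rw [if_neg hij] at this
          rw [if_neg hij]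
          simp only [neg_zero] at this ⊢
          positivity
      have hseg : v ∈ openSegment ℝ (0 : Fin d → ℝ) (s⁻¹ • v) := by
        refine ⟨1 - s, s, by linarith, hs0, by ring, ?_⟩
        rw [smul_zero, zero_add, smul_smul, mul_inv_cancel₀ (ne_of_gt hs0), one_smul]
      have := hv.2 h0Nb hyNb hseg
      exact hv0 this.symm
    have hu₀v : pairR u₀ v = -1 := by rw [← hu₀]; exact hcm1
    refine ⟨?_, hge, u₀, hu₀Δ, hu₀v⟩
    -- v is an extreme point of Δ*
    refine ⟨hsub hvNb, ?_⟩
    intro a ha b hb hseg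
    obtain ⟨p, q, hp, hq, hpq, hsum⟩ := hseg
    have hua : -1 ≤ pairR u₀ a := ha _ (mem_minkSum_single h0 hu₀Δ)
    have hub : -1 ≤ pairR u₀ b := hb _ (mem_minkSum_single h0 hu₀Δ)
    have hcomb : p * pairR u₀ a + q * pairR u₀ b = -1 := by
      rw [← pairR_smul_right, ← pairR_smul_right, ← pairR_add_right, hsum, hu₀v]
    have hua1 : pairR u₀ a = -1 := by nlinarith
    have hub1 : pairR u₀ b = -1 := by nlinarith
    have key : ∀ y ∈ dualPoly (minkSum Δ), pairR u₀ y = -1 → y ∈ Nb i := by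
      intro y hy hy1
      rw [hNbDef i]
      intro j x hx
      by_cases hij : i = j
      · subst hij
        rw [if_pos rfl]
        exact hy _ (mem_minkSum_single h0 hx)
      · rw [if_neg hij]
        have := hy _ (mem_minkSum_pair h0 hij hu₀Δ hx)
        rw [pairR_add_left, hy1] at this
        simp only [neg_zero]
        linarith
    exact hv.2 (key a ha hua1) (key b hb hub1) ⟨p, q, hp, hq, hpq, hsum⟩
  · rintro ⟨hvext, hge, u₀, hu₀Δ, hu₀v⟩
    have hvD : v ∈ dualPoly (minkSum Δ) := hvext.1
    have hvNb : v ∈ Nb i := by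
      rw [hNbDef i]
      intro j x hx
      by_cases hij : i = j
      · subst hij
        rw [if_pos rfl]
        exact hge x hx
      · rw [if_neg hij]
        have := hvD _ (mem_minkSum_pair h0 hij hu₀Δ hx)
        rw [pairR_add_left, hu₀v] at this
        simp only [neg_zero]
        linarith
    have hv0 : v ≠ 0 := by
      intro hveq
      rw [hveq, pairR_zero_right] at hu₀v
      norm_num at hu₀v
    refine ⟨⟨hvNb, ?_⟩, hv0⟩
    intro a ha b hb hseg
    exact hvext.2 (hsub ha) (hsub hb) hseg
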